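/- Let P = conv(u_0, u_1, u_2, u_3, u_4) ⊆ ℝ^4 be a full-dimensional lattice simplex with lattice length l(P) ≥ 3 such that no edge of P has lattice length 5. Suppose l_{0j} ∈ {4, 8} for j = 1, 2, 3, and 3 does not divide l_{04}. Let S = {i ∈ {0, 1, 2, 3} : l_{i4} ≠ 3}. Then the 4-dilations P_{i,4} are defined for all i ∈ S (in particular 4 divides l_{ij} for all distinct i, j ∈ {0,1,2,3}, and l_{i4} ≥ 4 for i ∈ S), and P = (⋃_{i∈S} P_{i,4}) ∪ P_{4,3}. -/

import Mathlib

open Finset Pointwise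

noncomputable section

/-- The real point corresponding to a lattice point. -/
def toR {n : ℕ} (v : Fin n → ℤ) : Fin n → ℝ := fun x => (v x : ℝ)

/-- The lattice simplex (as a subset of `ℝ^n`) with the given lattice vertices. -/
def lsimplex {n m : ℕ} (u : Fin m → Fin n → ℤ) : Set (Fin n → ℝ) :=
  convexHull ℝ (Set.range fun i => toR (u i))

/-- The lattice length `l_{ij}` of the edge `u_i u_j`:
the gcd of the coordinates of `u_j - u_i`. -/
def latLen {n m : ℕ} (u : Fin m → Fin n → ℤ) (i j : Fin m) : ℕ :=
  Finset.univ.gcd fun x => (u j x - u i x).natAbs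

/-- `r_{ij,k}`: the least nonnegative residue of `l_{ij}` modulo `k`. -/
def rmod {n m : ℕ} (u : Fin m → Fin n → ℤ) (i j : Fin m) (k : ℕ) : ℕ :=
  latLen u i j % k

/-- The vertices of the `k`-dilation `P_{i,k}`: the vertex `u_i` together with, for `j ≠ i`,
the points `((l_{ij} - r_{ij,k})/l_{ij})·u_j + (r_{ij,k}/l_{ij})·u_i`. -/
def dilVert {n m : ℕ} (u : Fin m → Fin n → ℤ) (i : Fin m) (k : ℕ) (j : Fin m) :
    Fin n → ℝ :=
  if j = i then toR (u i)
  else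
    ((((latLen u i j : ℝ) - (rmod u i j k : ℝ)) / (latLen u i j : ℝ)) • toR (u j))
      + (((rmod u i j k : ℝ) / (latLen u i j : ℝ)) • toR (u i))

/-- The `k`-dilation `P_{i,k}`. -/
def dil {n m : ℕ} (u : Fin m → Fin n → ℤ) (i : Fin m) (k : ℕ) : Set (Fin n → ℝ) :=
  convexHull ℝ (Set.range (dilVert u i k))

/-- The primitive edge vector `ũ_{ij} = (u_j - u_i)/l_{ij}`. -/
def primVec {n m : ℕ} (u : Fin m → Fin n → ℤ) (i j : Fin m) : Fin n → ℝ :=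
  (latLen u i j : ℝ)⁻¹ • (toR (u j) - toR (u i))

/-- The translated `k`-dilation `P_{i,k,t} = P_{i,k} + Σ_{j ≠ i} t_j ũ_{ij}`. -/
def dilT {n m : ℕ} (u : Fin m → Fin n → ℤ) (i : Fin m) (k : ℕ) (t : Fin m → ℕ) :
    Set (Fin n → ℝ) :=
  (fun y => y + ∑ j ∈ Finset.univ.erase i, (t j : ℝ) • primVec u i j) '' dil u i k

lemma comb_mem_hull {n m : ℕ} (f : Fin m → Fin n → ℝ) (w : Fin m → ℝ)
    (h0 : ∀ j, 0 ≤ w j) (h1 : ∑ j, w j = 1) :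
    ∑ j, w j • f j ∈ convexHull ℝ (Set.range f) := by
  have := Finset.centerMass_mem_convexHull (Finset.univ : Finset (Fin m))
    (w := w) (z := f) (fun i _ => h0 i) (by rw [h1]; norm_num)
    (fun i _ => Set.mem_range_self i)
  rwa [Finset.centerMass_eq_of_sum_1 _ _ h1] at this

lemma dil_subset {n m : ℕ} (u : Fin m → Fin n → ℤ) (i : Fin m) (k : ℕ)
    (hpos : ∀ j, j ≠ i → 0 < latLen u i j) : dil u i k ⊆ lsimplex u := by
  apply convexHull_min _ (convex_convexHull ℝ _)
  rintro x ⟨j, rfl⟩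
  by_cases hj : j = i
  · simp only [dilVert, if_pos hj]
    exact subset_convexHull ℝ _ ⟨i, rfl⟩
  · simp only [dilVert, if_neg hj]
    have hL : (0:ℝ) < (latLen u i j : ℝ) := by exact_mod_cast hpos j hj
    have hr : (rmod u i j k : ℝ) ≤ (latLen u i j : ℝ) := by
      exact_mod_cast Nat.mod_le _ _
    have hr0 : (0:ℝ) ≤ (rmod u i j k : ℝ) := Nat.cast_nonneg _
    exact (convex_convexHull ℝ _) (subset_convexHull ℝ _ (Set.mem_range_self j))
      (subset_convexHull ℝ _ (Set.mem_range_self i))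
      (div_nonneg (by linarith) hL.le) (div_nonneg hr0 hL.le)
      (by field_simp; ring)

lemma mem_dil {n m : ℕ} (u : Fin m → Fin n → ℤ) (i : Fin m) (k : ℕ) (w : Fin m → ℝ)
    (hw0 : ∀ j, 0 ≤ w j) (hw1 : ∑ j, w j = 1)
    (hpos : ∀ j, j ≠ i → (rmod u i j k : ℝ) < (latLen u i j : ℝ))
    (hcov : ∑ j ∈ Finset.univ.erase i,
        w j * ((latLen u i j : ℝ) / ((latLen u i j : ℝ) - (rmod u i j k : ℝ))) ≤ 1) :
    ∑ j, w j • toR (u j) ∈ dil u i k := by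
  classical
  set D : Fin m → ℝ :=
    fun j => (latLen u i j : ℝ) / ((latLen u i j : ℝ) - (rmod u i j k : ℝ)) with hD
  set μ : Fin m → ℝ :=
    fun j => if j = i then 1 - ∑ j' ∈ Finset.univ.erase i, w j' * D j' else w j * D j with hμ
  have hDnn : ∀ j, j ≠ i → 0 ≤ D j := by
    intro j hj
    have h1 := hpos j hj
    have h2 : (0:ℝ) ≤ (rmod u i j k : ℝ) := Nat.cast_nonneg _
    exact div_nonneg (by linarith) (by linarith)
  have hμerase : ∀ j ∈ Finset.univ.erase i, μ j = w j * D j := by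
    intro j hj
    simp [hμ, Finset.ne_of_mem_erase hj]
  have hμi : μ i = 1 - ∑ j' ∈ Finset.univ.erase i, w j' * D j' := by simp [hμ]
  have hμ0 : ∀ j, 0 ≤ μ j := by
    intro j
    by_cases hj : j = i
    · rw [hj, hμi]; linarith
    · rw [hμ]; simp only [if_neg hj]
      exact mul_nonneg (hw0 j) (hDnn j hj)
  have hμ1 : ∑ j, μ j = 1 := by
    rw [← Finset.sum_erase_add _ _ (Finset.mem_univ i),
      Finset.sum_congr rfl hμerase, hμi]
    ring
  have hwi : ∑ j ∈ Finset.univ.erase i, w j = 1 - w i := by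
    have := Finset.sum_erase_add Finset.univ w (Finset.mem_univ i)
    rw [hw1] at this
    linarith
  have key : ∑ j, μ j • dilVert u i k j = ∑ j, w j • toR (u j) := by
    rw [← Finset.sum_erase_add _ _ (Finset.mem_univ i)]
    conv_rhs => rw [← Finset.sum_erase_add Finset.univ (fun j => w j • toR (u j))
      (Finset.mem_univ i)]
    have hterm : ∀ j ∈ Finset.univ.erase i,
        μ j • dilVert u i k j = w j • toR (u j) + (μ j - w j) • toR (u i) := by
      intro j hj
      have hj' : j ≠ i := Finset.ne_of_mem_erase hj
      have h1 := hpos j hj'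
      have h2 : (0:ℝ) ≤ (rmod u i j k : ℝ) := Nat.cast_nonneg _
      have hL : (0:ℝ) < (latLen u i j : ℝ) := by linarith
      have hLr : (0:ℝ) < (latLen u i j : ℝ) - (rmod u i j k : ℝ) := by linarith
      rw [hμerase j hj]
      simp only [dilVert, if_neg hj', hD]
      rw [smul_add, smul_smul, smul_smul]
      congr 1
      · congr 1
        field_simp
      · congr 1
        field_simp
        ring
    rw [Finset.sum_congr rfl hterm, Finset.sum_add_distrib, ← Finset.sum_smul]
    have hdvi : dilVert u i k i = toR (u i) := by simp [dilVert]
    rw [hdvi]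
    have hsc : ∑ j ∈ Finset.univ.erase i, (μ j - w j) + μ i = w i := by
      rw [Finset.sum_sub_distrib, Finset.sum_congr rfl hμerase, hμi, hwi]
      ring
    rw [add_assoc, ← add_smul, hsc]
  rw [← key]
  exact comb_mem_hull _ μ hμ0 hμ1

-- helpers
lemma latLen_comm {n m : ℕ} (u : Fin m → Fin n → ℤ) (i j : Fin m) :
    latLen u i j = latLen u j i := by
  unfold latLen
  refine Finset.gcd_congr rfl fun x _ => ?_
  omega

lemma dvd_latLen {n m : ℕ} {u : Fin m → Fin n → ℤ} {i j : Fin m} {k : ℕ}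
    (h : ∀ x, (k : ℤ) ∣ (u j x - u i x)) : k ∣ latLen u i j :=
  Finset.dvd_gcd fun x _ => by
    have := Int.natAbs_dvd_natAbs.mpr (h x)
    simpa using this

lemma latLen_dvd_coord {n m : ℕ} {u : Fin m → Fin n → ℤ} {i j : Fin m} {k : ℕ}
    (h : k ∣ latLen u i j) (x : Fin n) : (k : ℤ) ∣ (u j x - u i x) := by
  have h2 : latLen u i j ∣ (u j x - u i x).natAbs :=
    Finset.gcd_dvd (Finset.mem_univ x)
  have h3 : k ∣ (u j x - u i x).natAbs := h.trans h2
  exact (Int.natCast_dvd_natCast.mpr h3).trans (Int.natAbs_dvd.mpr dvd_rfl)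

lemma hull_mem {n m : ℕ} (f : Fin m → Fin n → ℝ) {x : Fin n → ℝ}
    (hx : x ∈ convexHull ℝ (Set.range f)) :
    ∃ w : Fin m → ℝ, (∀ j, 0 ≤ w j) ∧ ∑ j, w j = 1 ∧ ∑ j, w j • f j = x := by
  rw [convexHull_range_eq_exists_affineCombination] at hx
  obtain ⟨s, w, hw0, hw1, hx⟩ := hx
  refine ⟨fun j => if j ∈ s then w j else 0, fun j => ?_, ?_, ?_⟩
  · dsimp only
    split
    · exact hw0 _ ‹_›
    · exact le_refl 0
  · simpa [Finset.sum_ite_mem] using hw1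
  · rw [← hx, Finset.affineCombination_eq_linear_combination _ _ _ hw1]
    simp [ite_smul, Finset.sum_ite_mem]


/-- Case B: in dimension 4, with `l(P) ≥ 3`, no edge of length 5,
`l_{0j} ∈ {4,8}` for `j = 1,2,3` and `3 ∤ l_{04}`; let `S = {i ∈ {0,1,2,3} : l_{i4} ≠ 3}`.
Then the dilations `P_{i,4}` for `i ∈ S` are defined (in particular `4 ∣ l_{ij}` for all
distinct `i,j ∈ {0,1,2,3}` and `l_{i4} ≥ 4` for `i ∈ S`), and
`P = (⋃_{i∈S} P_{i,4}) ∪ P_{4,3}`. -/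
theorem dim4_caseB
    (u : Fin 5 → Fin 4 → ℤ)
    (hind : AffineIndependent ℝ fun i => toR (u i))
    (hlen : ∀ i j, i ≠ j → 3 ≤ latLen u i j)
    (h5 : ∀ i j, i ≠ j → latLen u i j ≠ 5)
    (h01 : latLen u 0 1 = 4 ∨ latLen u 0 1 = 8)
    (h02 : latLen u 0 2 = 4 ∨ latLen u 0 2 = 8)
    (h03 : latLen u 0 3 = 4 ∨ latLen u 0 3 = 8)
    (h04 : ¬ (3 ∣ latLen u 0 4))
    (S : Set (Fin 5))
    (hS : S = {i : Fin 5 | i ≠ 4 ∧ latLen u i 4 ≠ 3}) :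
    (∀ i j : Fin 5, i ≠ j → i ≠ 4 → j ≠ 4 → 4 ∣ latLen u i j) ∧
    (∀ i ∈ S, 4 ≤ latLen u i 4) ∧
    (∀ i ∈ S, ∀ j, j ≠ i → 4 ≤ latLen u i j) ∧
    lsimplex u = (⋃ i ∈ S, dil u i 4) ∪ dil u 4 3 := by
  subst hS
  have d01 : 4 ∣ latLen u 0 1 := by rcases h01 with h | h <;> omega
  have d02 : 4 ∣ latLen u 0 2 := by rcases h02 with h | h <;> omega
  have d03 : 4 ∣ latLen u 0 3 := by rcases h03 with h | h <;> omega
  have h0c : ∀ i : Fin 5, i ≠ 4 → ∀ x, (4:ℤ) ∣ (u i x - u 0 x) := by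
    intro i hi x
    fin_cases i
    · simp
    · exact latLen_dvd_coord d01 x
    · exact latLen_dvd_coord d02 x
    · exact latLen_dvd_coord d03 x
    · exact absurd rfl hi
  have hdvd : ∀ i j : Fin 5, i ≠ 4 → j ≠ 4 → 4 ∣ latLen u i j := by
    intro i j hi hj
    apply dvd_latLen
    intro x
    have a := h0c i hi x
    have b := h0c j hj x
    omega
  have hlat0 : ∀ i j : Fin 5, i ≠ j → 0 < latLen u i j := fun i j h => by
    have := hlen i j h; omega
  have hS4 : ∀ i : Fin 5, i ≠ 4 → latLen u i 4 ≠ 3 → 4 ≤ latLen u i 4 := by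
    intro i hi h3
    have := hlen i 4 hi; omega
  refine ⟨fun i j _ hi hj => hdvd i j hi hj, ?_, ?_, ?_⟩
  · rintro i ⟨hi4, hi3⟩
    exact hS4 i hi4 hi3
  · rintro i ⟨hi4, hi3⟩ j hj
    by_cases hj4 : j = 4
    · subst hj4; exact hS4 i hi4 hi3
    · have h1 := hdvd i j hi4 hj4
      have h2 := hlen i j (fun h => hj h.symm)
      omega
  apply Set.Subset.antisymm
  · -- forward inclusion
    intro x hx
    unfold lsimplex at hx
    obtain ⟨w, hw0, hw1, rfl⟩ := hull_mem _ hx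
    have hsum_gen : ∀ i : Fin 5, ∑ j ∈ Finset.univ.erase i, w j = 1 - w i := by
      intro i
      have := Finset.sum_erase_add Finset.univ w (Finset.mem_univ i)
      rw [hw1] at this; linarith
    by_cases hA : ∃ i : Fin 5, (i ≠ 4 ∧ latLen u i 4 ≠ 3) ∧
        w 4 * ((rmod u i 4 4 : ℝ) / ((latLen u i 4 : ℝ) - (rmod u i 4 4 : ℝ))) ≤ w i
    · obtain ⟨i, ⟨hi4, hi3⟩, hle⟩ := hA
      left
      refine Set.mem_biUnion (show i ∈ {i : Fin 5 | i ≠ 4 ∧ latLen u i 4 ≠ 3} from ⟨hi4, hi3⟩) ?_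
      apply mem_dil u i 4 w hw0 hw1
      · intro j hj
        by_cases hj4 : j = 4
        · subst hj4
          have h1 := hS4 i hi4 hi3
          have h2 : rmod u i 4 4 < latLen u i 4 := by unfold rmod; omega
          exact_mod_cast h2
        · have h1 := hdvd i j hi4 hj4
          have h2 := hlat0 i j (fun h => hj h.symm)
          have h3 : rmod u i j 4 < latLen u i j := by unfold rmod; omega
          exact_mod_cast h3
      · -- covering condition, case A
        have hL4 : (4:ℕ) ≤ latLen u i 4 := hS4 i hi4 hi3
        have hr4 : rmod u i 4 4 < latLen u i 4 := by unfold rmod; omega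
        have hLr : (0:ℝ) < (latLen u i 4 : ℝ) - (rmod u i 4 4 : ℝ) := by
          have h1 : ((rmod u i 4 4 : ℕ):ℝ) < ((latLen u i 4 : ℕ):ℝ) := by exact_mod_cast hr4
          linarith
        have key : ∑ j ∈ Finset.univ.erase i,
            (w j * ((latLen u i j : ℝ) / ((latLen u i j : ℝ) - (rmod u i j 4 : ℝ))) - w j)
            = w 4 * ((latLen u i 4 : ℝ) / ((latLen u i 4 : ℝ) - (rmod u i 4 4 : ℝ))) - w 4 := by
          apply Finset.sum_eq_single_of_mem
          · exact Finset.mem_erase.mpr ⟨Ne.symm hi4, Finset.mem_univ _⟩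
          · intro j hj hj4
            have h1 := hdvd i j hi4 hj4
            have h2 := hlen i j (fun h => (Finset.ne_of_mem_erase hj) h.symm)
            have hr0 : rmod u i j 4 = 0 := by unfold rmod; omega
            have hLne : ((latLen u i j : ℕ):ℝ) ≠ 0 := Nat.cast_ne_zero.mpr (by omega)
            rw [hr0]
            push_cast
            rw [sub_zero, div_self hLne, mul_one, sub_self]
        have e1 : (latLen u i 4 : ℝ) / ((latLen u i 4 : ℝ) - (rmod u i 4 4 : ℝ))
            = 1 + (rmod u i 4 4 : ℝ) / ((latLen u i 4 : ℝ) - (rmod u i 4 4 : ℝ)) := by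
          field_simp
          ring
        have e2 : ∑ j ∈ Finset.univ.erase i,
            w j * ((latLen u i j : ℝ) / ((latLen u i j : ℝ) - (rmod u i j 4 : ℝ)))
            = ∑ j ∈ Finset.univ.erase i,
              (w j * ((latLen u i j : ℝ) / ((latLen u i j : ℝ) - (rmod u i j 4 : ℝ))) - w j)
              + ∑ j ∈ Finset.univ.erase i, w j := by
          rw [← Finset.sum_add_distrib]
          exact Finset.sum_congr rfl fun j _ => by ring
        rw [e2, key, hsum_gen i, e1]
        have : w 4 * (1 + (rmod u i 4 4 : ℝ) / ((latLen u i 4 : ℝ) - (rmod u i 4 4 : ℝ))) - w 4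
            = w 4 * ((rmod u i 4 4 : ℝ) / ((latLen u i 4 : ℝ) - (rmod u i 4 4 : ℝ))) := by
          ring
        rw [this]
        linarith
    · -- case B : x ∈ dil u 4 3
      push_neg at hA
      right
      apply mem_dil u 4 3 w hw0 hw1
      · intro j hj
        have h2 := hlen 4 j (fun h => hj h.symm)
        have h3 : rmod u 4 j 3 < latLen u 4 j := by unfold rmod; omega
        exact_mod_cast h3
      · -- covering condition, case B
        have hbound : ∀ j ∈ Finset.univ.erase (4:Fin 5),
            w j * ((latLen u 4 j : ℝ) / ((latLen u 4 j : ℝ) - (rmod u 4 j 3 : ℝ)))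
              ≤ w j + w 4 / 4 := by
          intro j hj
          have hj4 : j ≠ 4 := Finset.ne_of_mem_erase hj
          have hlj : 3 ≤ latLen u 4 j := hlen 4 j (Ne.symm hj4)
          have hs_lt : rmod u 4 j 3 < latLen u 4 j := by unfold rmod; omega
          have hLrpos : (0:ℝ) < (latLen u 4 j : ℝ) - (rmod u 4 j 3 : ℝ) := by
            have h1 : ((rmod u 4 j 3 : ℕ):ℝ) < ((latLen u 4 j : ℕ):ℝ) := by exact_mod_cast hs_lt
            linarith
          have hw4 := hw0 4
          have hwjn := hw0 j
          by_cases hc : latLen u j 4 = 3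
          · have hL3 : latLen u 4 j = 3 := by rw [latLen_comm]; exact hc
            have hs0 : rmod u 4 j 3 = 0 := by unfold rmod; omega
            have hLne : ((latLen u 4 j : ℕ):ℝ) ≠ 0 := Nat.cast_ne_zero.mpr (by omega)
            rw [hs0]
            push_cast
            rw [sub_zero, div_self hLne, mul_one]
            linarith
          · have hwj := hA j ⟨hj4, hc⟩
            have hcomm : latLen u 4 j = latLen u j 4 := latLen_comm u 4 j
            have ha4 : 4 ≤ latLen u j 4 := hS4 j hj4 hc
            have ha5 : latLen u j 4 ≠ 5 := h5 j 4 hj4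
            -- sigma bound (nat level)
            have hσn : 4 * rmod u 4 j 3 ≤ latLen u 4 j := by unfold rmod; omega
            -- rho bound (nat level)
            have hρn : 7 * rmod u j 4 4 ≤ 3 * latLen u j 4 := by unfold rmod; omega
            have hρlt : rmod u j 4 4 < latLen u j 4 := by unfold rmod; omega
            have hbpos : (0:ℝ) < (latLen u j 4 : ℝ) - (rmod u j 4 4 : ℝ) := by
              have h1 : ((rmod u j 4 4 : ℕ):ℝ) < ((latLen u j 4 : ℕ):ℝ) := by exact_mod_cast hρlt
              linarith
            have hσ : (rmod u 4 j 3 : ℝ) / ((latLen u 4 j : ℝ) - (rmod u 4 j 3 : ℝ)) ≤ 1/3 := by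
              rw [div_le_iff₀ hLrpos]
              have h1 : 4 * ((rmod u 4 j 3 : ℕ):ℝ) ≤ ((latLen u 4 j : ℕ):ℝ) := by
                exact_mod_cast hσn
              linarith
            have hρ : (rmod u j 4 4 : ℝ) / ((latLen u j 4 : ℝ) - (rmod u j 4 4 : ℝ)) ≤ 3/4 := by
              rw [div_le_iff₀ hbpos]
              have h1 : 7 * ((rmod u j 4 4 : ℕ):ℝ) ≤ 3 * ((latLen u j 4 : ℕ):ℝ) := by
                exact_mod_cast hρn
              linarith
            have e1 : (latLen u 4 j : ℝ) / ((latLen u 4 j : ℝ) - (rmod u 4 j 3 : ℝ))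
                = 1 + (rmod u 4 j 3 : ℝ) / ((latLen u 4 j : ℝ) - (rmod u 4 j 3 : ℝ)) := by
              field_simp
              ring
            have t1 : w j * ((rmod u 4 j 3 : ℝ) / ((latLen u 4 j : ℝ) - (rmod u 4 j 3 : ℝ)))
                ≤ w j * (1/3) := mul_le_mul_of_nonneg_left hσ hwjn
            have t2 : w j ≤ w 4 * (3/4) := by
              calc w j ≤ w 4 * ((rmod u j 4 4 : ℝ) / ((latLen u j 4 : ℝ) - (rmod u j 4 4 : ℝ))) :=
                    hwj.le
                _ ≤ w 4 * (3/4) := mul_le_mul_of_nonneg_left hρ hw4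
            calc w j * ((latLen u 4 j : ℝ) / ((latLen u 4 j : ℝ) - (rmod u 4 j 3 : ℝ)))
                = w j + w j * ((rmod u 4 j 3 : ℝ) / ((latLen u 4 j : ℝ) - (rmod u 4 j 3 : ℝ))) := by
                  rw [e1]; ring
              _ ≤ w j + w j * (1/3) := by linarith
              _ ≤ w j + (w 4 * (3/4)) * (1/3) := by linarith
              _ = w j + w 4 / 4 := by ring
        have hcard : (Finset.univ.erase (4:Fin 5)).card = 4 := by decide
        calc ∑ j ∈ Finset.univ.erase (4:Fin 5),
              w j * ((latLen u 4 j : ℝ) / ((latLen u 4 j : ℝ) - (rmod u 4 j 3 : ℝ)))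
            ≤ ∑ j ∈ Finset.univ.erase (4:Fin 5), (w j + w 4 / 4) := Finset.sum_le_sum hbound
          _ = (1 - w 4) + (Finset.univ.erase (4:Fin 5)).card • (w 4 / 4) := by
              rw [Finset.sum_add_distrib, hsum_gen 4, Finset.sum_const]
          _ = 1 := by rw [hcard]; push_cast; ring
  · -- reverse inclusion
    rintro x (hx | hx)
    · obtain ⟨i, hi, hx⟩ := Set.mem_iUnion₂.mp hx
      exact dil_subset u i 4 (fun j hj => hlat0 i j (fun h => hj h.symm)) hx
    · exact dil_subset u 4 3 (fun j hj => hlat0 4 j (fun h => hj h.symm)) hx
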